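/- For every n ≥ 0 and 1 ≤ i ≤ n+1, the elementary quasi-codegeneracy satisfies u_i^{(n)} = z_{i−1}^{(n)} ∘ s_{i−1}^{(n)} ∘ (z_{i−1}^{(n+1)})^{−1} as maps [n+1] → [n], where z_{i−1}^{(n+1)} is the cyclic permutation of [n+1] and z_{i−1}^{(n)} the cyclic permutation of [n]. In particular u_1 = s_0. -/

import Mathlib

/-- The elementary coface `d_i^{(n+1)} : [n] → [n+1]` (monotonic injection omitting `i`):
`k ↦ k` for `k < i` and `k ↦ k+1` for `k ≥ i`. -/
def dMap (n i : ℕ) : Fin (n + 1) → Fin (n + 2) :=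
  fun k => if (k : ℕ) < i then ⟨k, by omega⟩ else ⟨(k : ℕ) + 1, by omega⟩

/-- The elementary quasi-codegeneracy `u_i^{(n)} : [n+1] → [n]`:
`u_i 0 = u_i i = 0`, `u_i k = k` for `1 ≤ k ≤ i-1`, and `u_i k = k-1` for `k > i`. -/
def uMap (n i : ℕ) : Fin (n + 2) → Fin (n + 1) :=
  fun k => if (k : ℕ) = 0 ∨ (k : ℕ) = i then 0
    else if h : (k : ℕ) < i ∧ (k : ℕ) < n + 1 then ⟨k, h.2⟩
    else ⟨(k : ℕ) - 1, by omega⟩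

/-- The adjacent transposition `t_i : [n] → [n]` exchanging `i` and `i+1`. -/
def tMap (n i : ℕ) : Fin (n + 1) → Fin (n + 1) :=
  fun k => if h : (k : ℕ) = i ∧ i + 1 < n + 1 then ⟨i + 1, h.2⟩
    else if h2 : (k : ℕ) = i + 1 then ⟨i, by omega⟩
    else k

/-- The standard cyclic permutation `z_i : [n] → [n]`:
`k ↦ k+1` for `k ≤ i-1`, `i ↦ 0`, and `k ↦ k` for `k > i`. -/
def zMap (n i : ℕ) : Fin (n + 1) → Fin (n + 1) :=
  fun k => if (k : ℕ) = i then 0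
    else if h : (k : ℕ) < i ∧ (k : ℕ) + 1 < n + 1 then ⟨(k : ℕ) + 1, h.2⟩
    else k

/-- The elementary codegeneracy `s_i^{(n)} : [n+1] → [n]`:
`k ↦ k` for `k ≤ i` and `k ↦ k-1` for `k > i`. -/
def sMap (n i : ℕ) : Fin (n + 2) → Fin (n + 1) :=
  fun k => if h : (k : ℕ) ≤ i ∧ (k : ℕ) < n + 1 then ⟨k, h.2⟩
    else ⟨(k : ℕ) - 1, by omega⟩

/-- `u_i = z_{i-1} ∘ s_{i-1} ∘ (z_{i-1})⁻¹` as maps `[n+1] → [n]` for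
`1 ≤ i ≤ n+1` (where `zinv` is any two-sided inverse of the cyclic permutation
`z_{i-1}` of `[n+1]`); in particular `u_1 = s_0`. -/
theorem u_eq_conj_s (n i : ℕ) (hi1 : 1 ≤ i) (hi2 : i ≤ n + 1)
    (zinv : Fin (n + 2) → Fin (n + 2))
    (hzr : zMap (n + 1) (i - 1) ∘ zinv = id)
    (hzl : zinv ∘ zMap (n + 1) (i - 1) = id) :
    uMap n i = zMap n (i - 1) ∘ sMap n (i - 1) ∘ zinv ∧ uMap n 1 = sMap n 0 := by
  have zval : ∀ (m j : ℕ) (hj : j ≤ m) (k : Fin (m + 1)),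
      ((zMap m j k : Fin (m + 1)) : ℕ) =
        if (k : ℕ) = j then 0 else if (k : ℕ) < j then (k : ℕ) + 1 else (k : ℕ) := by
    intro m j hj k
    simp only [zMap]
    split_ifs <;> simp_all <;> omega
  have sval : ∀ (j : ℕ) (k : Fin (n + 2)),
      ((sMap n j k : Fin (n + 1)) : ℕ) =
        if (k : ℕ) ≤ j ∧ (k : ℕ) < n + 1 then (k : ℕ) else (k : ℕ) - 1 := by
    intro j k
    simp only [sMap]
    split_ifs <;> simp_all
  have uval : ∀ (j : ℕ) (k : Fin (n + 2)),
      ((uMap n j k : Fin (n + 1)) : ℕ) =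
        if (k : ℕ) = 0 ∨ (k : ℕ) = j then 0
        else if (k : ℕ) < j ∧ (k : ℕ) < n + 1 then (k : ℕ) else (k : ℕ) - 1 := by
    intro j k
    simp only [uMap]
    split_ifs <;> simp_all
  have key : uMap n i ∘ zMap (n + 1) (i - 1) = zMap n (i - 1) ∘ sMap n (i - 1) := by
    funext k
    apply Fin.ext
    simp only [Function.comp_apply]
    rw [uval, zval (n+1) (i-1) (by omega) k, zval n (i-1) (by omega), sval]
    have hk := k.isLt
    split_ifs <;> (try simp only [false_or, or_false] at *) <;> omega
  have main : uMap n i = zMap n (i - 1) ∘ sMap n (i - 1) ∘ zinv := by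
    have h1 : uMap n i = (uMap n i ∘ zMap (n + 1) (i - 1)) ∘ zinv := by
      funext k
      have := congrFun hzr k
      simp only [Function.comp_apply, id_eq] at this ⊢
      rw [this]
    rw [h1, key]
    rfl
  refine ⟨main, ?_⟩
  funext k
  apply Fin.ext
  rw [uval, sval]
  have hk := k.isLt
  split_ifs <;> omega
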